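/- For every t > 2, the permutation 2,5,4,1,6,7,...,(t+4),3 of length t+4 is sortable by t stacks in series (by some sequence of legal moves), but the left-greedy algorithm on t stacks fails on it (specifically, it fails at the moment the element t+4 would need to enter the stacks). -/

import Mathlib

/-- A configuration for sorting with `t` stacks in series: the remaining input,
the stacks (index `0` is the leftmost, next to the output; index `t-1` is the
rightmost, next to the input; the head of each list is the top of the stack),
and the output produced so far. -/
structure Conf where
  input : List ℕ
  stks : List (List ℕ)
  output : List ℕ
deriving DecidableEq, Repr

/-- `x` may be placed on top of a stack iff the stack is empty or `x` is smaller
than the current top (stacks are increasing from top to bottom). -/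
def canPush (x : ℕ) : List ℕ → Bool
  | [] => true
  | y :: _ => decide (x < y)

/-- Moves, ordered left to right: `0` = pop the leftmost stack to the output
(legal only for the next element of the identity); `m` with `0 < m < t` = move the
top of stack `m` one stack to the left; `t` = push the next input element onto the
rightmost stack. -/
def legal (t : ℕ) (c : Conf) (m : ℕ) : Bool :=
  if m = 0 then
    match c.stks.getD 0 [] with
    | x :: _ => x == c.output.length + 1
    | [] => false
  else if m < t then
    match c.stks.getD m [] with
    | x :: _ => canPush x (c.stks.getD (m-1) [])
    | [] => false
  else if m = t then
    match c.input with
    | x :: _ => canPush x (c.stks.getD (t-1) [])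
    | [] => false
  else false

/-- Perform move `m` on configuration `c` (with `t` stacks). -/
def applyMove (t : ℕ) (c : Conf) (m : ℕ) : Conf :=
  if m = 0 then
    match c.stks.getD 0 [] with
    | x :: s => ⟨c.input, c.stks.set 0 s, c.output ++ [x]⟩
    | [] => c
  else if m < t then
    match c.stks.getD m [] with
    | x :: s => ⟨c.input, (c.stks.set m s).set (m-1) (x :: c.stks.getD (m-1) []), c.output⟩
    | [] => c
  else
    match c.input with
    | x :: rest => ⟨rest, c.stks.set (t-1) (x :: c.stks.getD (t-1) []), c.output⟩
    | [] => c

def initConf (t : ℕ) (p : List ℕ) : Conf := ⟨p, List.replicate t [], []⟩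

/-- The fully sorted configuration: empty input and stacks, output `1,2,...,n`. -/
def finalConf (t n : ℕ) : Conf := ⟨[], List.replicate t [], List.range' 1 n⟩

/-- Run a sequence of moves, requiring each to be legal. -/
def runLegal (t : ℕ) : Conf → List ℕ → Option Conf
  | c, [] => some c
  | c, m :: ms => if legal t c m then runLegal t (applyMove t c m) ms else none

/-- `p` is sortable by `t` stacks in series by some sequence of legal moves. -/
def Sortable (t : ℕ) (p : List ℕ) : Prop :=
  ∃ ms : List ℕ, runLegal t (initConf t p) ms = some (finalConf t p.length)

/-- The leftmost legal move, if any. -/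
def leftMove (t : ℕ) (c : Conf) : Option ℕ :=
  ((List.range (t+1)).filter (fun m => legal t c m)).head?

/-- The rightmost legal move, if any. -/
def rightMove (t : ℕ) (c : Conf) : Option ℕ :=
  ((List.range (t+1)).filter (fun m => legal t c m)).getLast?

/-- One step of a greedy algorithm given by the move selector `mv`
(the configuration is unchanged if no move is legal, i.e. the algorithm fails or is done). -/
def greedyStep (mv : ℕ → Conf → Option ℕ) (t : ℕ) (c : Conf) : Conf :=
  match mv t c with
  | some m => applyMove t c m
  | none => c

/-- The greedy algorithm given by `mv` sorts `p` with `t` stacks in series. -/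
def GreedySorts (mv : ℕ → Conf → Option ℕ) (t : ℕ) (p : List ℕ) : Prop :=
  ∃ k : ℕ, (greedyStep mv t)^[k] (initConf t p) = finalConf t p.length

def LeftGreedySorts : ℕ → List ℕ → Prop := GreedySorts leftMove
def RightGreedySorts : ℕ → List ℕ → Prop := GreedySorts rightMove

/-- `p` is a permutation of `1,...,n` (as a list). -/
def IsPermOf (n : ℕ) (p : List ℕ) : Prop := p.Perm (List.range' 1 n)

/-- The position of the element `x` in configuration `c`: `0` if in the output
(furthest left), `j+1` if in stack `j`, `t+1` if still in the input (furthest right). -/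
def posOf (t : ℕ) (c : Conf) (x : ℕ) : ℕ :=
  if x ∈ c.output then 0
  else match (List.range t).find? (fun j => decide (x ∈ c.stks.getD j [])) with
    | some j => j + 1
    | none => t + 1

/-- `c` is at the `i`-th critical moment for the greedy algorithm `mv` on a
permutation of length `n`: either the chosen move is the entry of the `i`-th
element into the stacks, or the algorithm fails (no legal move, incomplete output). -/
def IsCrit (mv : ℕ → Conf → Option ℕ) (t i n : ℕ) (c : Conf) : Prop :=
  (c.input.length + i = n + 1 ∧ mv t c = some t) ∨
  (mv t c = none ∧ c.output.length < n)

/-- `c` is the configuration at the `i`-th critical moment of the greedy algorithm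
`mv` run on `p` (the first moment along the run satisfying `IsCrit`). -/
def CritConf (mv : ℕ → Conf → Option ℕ) (t i n : ℕ) (p : List ℕ) (c : Conf) : Prop :=
  ∃ k : ℕ, (greedyStep mv t)^[k] (initConf t p) = c ∧ IsCrit mv t i n c ∧
    ∀ k' < k, ¬ IsCrit mv t i n ((greedyStep mv t)^[k'] (initConf t p))

/-- No stack is empty while some stack to its right is nonempty. -/
def NoGap (t : ℕ) (c : Conf) : Prop :=
  ∀ j j' : ℕ, j < j' → j' < t → c.stks.getD j' [] ≠ [] → c.stks.getD j [] ≠ []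

/-- `r` contains `q` as a pattern. -/
def ContainsPat (r q : List ℕ) : Prop :=
  ∃ f : Fin q.length → Fin r.length, StrictMono f ∧
    ∀ a b : Fin q.length, q.get a < q.get b ↔ r.get (f a) < r.get (f b)

namespace Stmt15Aux

def mapf (t : ℕ) (f : ℕ → List ℕ) : List (List ℕ) := (List.range t).map f

lemma mapf_getD (t : ℕ) (f : ℕ → List ℕ) (m : ℕ) (h : m < t) :
    (mapf t f).getD m [] = f m := by
  rw [List.getD_eq_getElem _ _ (by simpa [mapf] using h)]
  simp [mapf]

lemma mapf_set (t : ℕ) (f : ℕ → List ℕ) (m : ℕ) (v : List ℕ) :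
    (mapf t f).set m v = mapf t (fun l => if l = m then v else f l) := by
  apply List.ext_getElem
  · simp [mapf]
  · intro n h1 h2
    simp only [List.getElem_set]
    simp only [mapf, List.getElem_map, List.getElem_range]
    rcases eq_or_ne m n with h | h
    · simp [h]
    · simp [h, Ne.symm h]

lemma mapf_congr {t : ℕ} {f g : ℕ → List ℕ} (h : ∀ l < t, f l = g l) :
    mapf t f = mapf t g :=
  List.map_congr_left (fun a ha => h a (List.mem_range.mp ha))

lemma mapf_nil (t : ℕ) : mapf t (fun _ => []) = List.replicate t ([] : List ℕ) := by
  apply List.ext_getElem <;> simp [mapf]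

lemma legal_zero (t : ℕ) (c : Conf) :
    legal t c 0 = (match c.stks.getD 0 [] with
      | x :: _ => x == c.output.length + 1
      | [] => false) := by
  simp [legal]

lemma legal_mid (t m : ℕ) (c : Conf) (h1 : m ≠ 0) (h2 : m < t) :
    legal t c m = (match c.stks.getD m [] with
      | x :: _ => canPush x (c.stks.getD (m-1) [])
      | [] => false) := by
  simp [legal, h1, h2]

lemma legal_top (t : ℕ) (c : Conf) (ht : t ≠ 0) :
    legal t c t = (match c.input with
      | x :: _ => canPush x (c.stks.getD (t-1) [])
      | [] => false) := by
  simp [legal, ht]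

lemma leftMove_eq_some (t m0 : ℕ) (c : Conf) (h0 : m0 ≤ t)
    (hlow : ∀ m < m0, legal t c m = false) (hm : legal t c m0 = true) :
    leftMove t c = some m0 := by
  unfold leftMove
  have hr : List.range (t+1) = List.range m0 ++ List.range' m0 (t + 1 - m0) := by
    rw [List.range_eq_range', List.range_eq_range']
    have h3 := List.range'_append (s := 0) (m := m0) (n := t+1-m0) (step := 1)
    norm_num at h3
    have h2 : t + 1 - m0 + m0 = t + 1 := by omega
    rw [Nat.add_comm m0, h2] at h3
    exact h3.symm
  have h1 : (List.range m0).filter (fun m => legal t c m) = [] := by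
    apply List.filter_eq_nil_iff.mpr
    intro a ha
    simp only [List.mem_range] at ha
    simp [hlow a ha]
  have h2 : t + 1 - m0 = (t - m0) + 1 := by omega
  rw [hr, List.filter_append, h1, h2, List.range'_succ, List.filter_cons]
  simp [hm]

lemma leftMove_eq_none (t : ℕ) (c : Conf) (h : ∀ m ≤ t, legal t c m = false) :
    leftMove t c = none := by
  unfold leftMove
  have h1 : (List.range (t+1)).filter (fun m => legal t c m) = [] := by
    apply List.filter_eq_nil_iff.mpr
    intro a ha
    simp only [List.mem_range, Nat.lt_succ_iff] at ha
    simp [h a ha]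
  simp [h1]

lemma greedy_eq (t m0 : ℕ) (c : Conf) (h : leftMove t c = some m0) :
    greedyStep leftMove t c = applyMove t c m0 := by simp [greedyStep, h]

lemma greedy_none (t : ℕ) (c : Conf) (h : leftMove t c = none) :
    greedyStep leftMove t c = c := by simp [greedyStep, h]

lemma applyMove_pop (t : ℕ) (f : ℕ → List ℕ) (inp out : List ℕ) (x : ℕ) (r : List ℕ)
    (ht : 0 < t) (h0 : f 0 = x :: r) :
    applyMove t ⟨inp, mapf t f, out⟩ 0 =
      ⟨inp, mapf t (fun l => if l = 0 then r else f l), out ++ [x]⟩ := by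
  have hg : (mapf t f).getD 0 [] = x :: r := by rw [mapf_getD t f 0 ht, h0]
  simp only [applyMove, reduceIte, hg, mapf_set]

lemma applyMove_mid (t m : ℕ) (f : ℕ → List ℕ) (inp out : List ℕ) (x : ℕ) (r : List ℕ)
    (h1 : m ≠ 0) (h2 : m < t) (hm : f m = x :: r) :
    applyMove t ⟨inp, mapf t f, out⟩ m =
      ⟨inp, mapf t (fun l => if l = m - 1 then x :: f (m-1) else if l = m then r else f l),
        out⟩ := by
  have hg : (mapf t f).getD m [] = x :: r := by rw [mapf_getD t f m h2, hm]
  have hg' : (mapf t f).getD (m-1) [] = f (m-1) := mapf_getD t f (m-1) (by omega)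
  simp only [applyMove, if_neg h1, if_pos h2, hg, hg']
  rw [mapf_set, mapf_set]

lemma applyMove_push (t : ℕ) (f : ℕ → List ℕ) (inp' out : List ℕ) (x : ℕ) (ht : 0 < t) :
    applyMove t ⟨x :: inp', mapf t f, out⟩ t =
      ⟨inp', mapf t (fun l => if l = t - 1 then x :: f (t-1) else f l), out⟩ := by
  have hg' : (mapf t f).getD (t-1) [] = f (t-1) := mapf_getD t f (t-1) (by omega)
  simp only [applyMove, if_neg (by omega : ¬ (t = 0)), if_neg (lt_irrefl t), hg']
  rw [mapf_set]

lemma runLegal_cons (t : ℕ) (c : Conf) (m : ℕ) (ms : List ℕ) (h : legal t c m = true) :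
    runLegal t c (m :: ms) = runLegal t (applyMove t c m) ms := by simp [runLegal, h]

lemma runLegal_append (t : ℕ) (ms1 ms2 : List ℕ) (a b : Conf)
    (h1 : runLegal t a ms1 = some b) :
    runLegal t a (ms1 ++ ms2) = runLegal t b ms2 := by
  induction ms1 generalizing a with
  | nil => simp [runLegal] at h1; subst h1; rfl
  | cons m ms ih =>
    by_cases h : legal t a m
    · rw [List.cons_append, runLegal_cons t a m _ h]
      rw [runLegal_cons t a m ms h] at h1
      exact ih _ h1
    · simp [runLegal, h] at h1

lemma run_trans {t : ℕ} {a b c : Conf} (h1 : ∃ ms, runLegal t a ms = some b)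
    (h2 : ∃ ms, runLegal t b ms = some c) : ∃ ms, runLegal t a ms = some c := by
  obtain ⟨ms1, h1⟩ := h1; obtain ⟨ms2, h2⟩ := h2
  exact ⟨ms1 ++ ms2, by rw [runLegal_append t ms1 ms2 a b h1]; exact h2⟩

lemma iter_trans {g : Conf → Conf} {a b c : Conf} (h1 : ∃ k, g^[k] a = b)
    (h2 : ∃ k, g^[k] b = c) : ∃ k, g^[k] a = c := by
  obtain ⟨k1, h1⟩ := h1; obtain ⟨k2, h2⟩ := h2
  exact ⟨k2 + k1, by rw [Function.iterate_add_apply, h1, h2]⟩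

end Stmt15Aux
namespace Stmt15Aux

def slideMoves (j i : ℕ) : List ℕ := (List.range' (j+1) (i-j)).reverse

lemma slideMoves_self (j : ℕ) : slideMoves j j = [] := by simp [slideMoves]

lemma slideMoves_step (j i : ℕ) (h : j < i) : slideMoves j i = i :: slideMoves j (i-1) := by
  unfold slideMoves
  have h1 : i - j = (i - 1 - j) + 1 := by omega
  have h2 : j + 1 + 1 * (i - 1 - j) = i := by omega
  rw [h1, List.range'_concat, h2, List.reverse_append]
  rfl

lemma legal_zero_mapf (t : ℕ) (f : ℕ → List ℕ) (inp out : List ℕ) (ht : 0 < t) :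
    legal t ⟨inp, mapf t f, out⟩ 0 =
      (match f 0 with | x :: _ => x == out.length + 1 | [] => false) := by
  rw [legal_zero]
  show (match (mapf t f).getD 0 [] with
    | x :: _ => x == out.length + 1 | [] => false) = _
  rw [mapf_getD t f 0 ht]

lemma legal_mid_mapf (t m : ℕ) (f : ℕ → List ℕ) (inp out : List ℕ)
    (h1 : m ≠ 0) (h2 : m < t) :
    legal t ⟨inp, mapf t f, out⟩ m =
      (match f m with | x :: _ => canPush x (f (m-1)) | [] => false) := by
  rw [legal_mid t m _ h1 h2]
  show (match (mapf t f).getD m [] with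
    | x :: _ => canPush x ((mapf t f).getD (m-1) []) | [] => false) = _
  rw [mapf_getD t f m h2, mapf_getD t f (m-1) (by omega)]

lemma legal_top_mapf (t : ℕ) (f : ℕ → List ℕ) (inp out : List ℕ) (ht : 0 < t) :
    legal t ⟨inp, mapf t f, out⟩ t =
      (match inp with | x :: _ => canPush x (f (t-1)) | [] => false) := by
  rw [legal_top t _ (by omega)]
  show (match inp with | x :: _ => canPush x ((mapf t f).getD (t-1) []) | [] => false) = _
  rcases inp with _ | ⟨x, inp⟩
  · rfl
  · rw [mapf_getD t f (t-1) (by omega)]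

lemma runSlide (t j : ℕ) : ∀ (i : ℕ) (f : ℕ → List ℕ) (inp out : List ℕ) (x : ℕ) (r : List ℕ),
    j < i → i < t → f i = x :: r →
    (∀ l, j ≤ l → l < i → canPush x (f l) = true) →
    runLegal t ⟨inp, mapf t f, out⟩ (slideMoves j i) =
      some ⟨inp, mapf t (fun l => if l = i then r else if l = j then x :: f j else f l), out⟩ := by
  intro i
  induction i using Nat.strong_induction_on with
  | _ i ih =>
    intro f inp out x r hji hit hfi hcan
    rw [slideMoves_step j i hji]
    have hleg : legal t ⟨inp, mapf t f, out⟩ i = true := by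
      rw [legal_mid_mapf t i f inp out (by omega) hit, hfi]
      exact hcan (i-1) (by omega) (by omega)
    rw [runLegal_cons t _ i _ hleg, applyMove_mid t i f inp out x r (by omega) hit hfi]
    by_cases hb : i - 1 = j
    · rw [hb, slideMoves_self]
      simp only [runLegal, Option.some.injEq, Conf.mk.injEq, true_and, and_true]
      apply mapf_congr
      intro l _
      split_ifs <;> first | rfl | omega | simp_all
    · rw [ih (i-1) (by omega) _ inp out x (f (i-1)) (by omega) (by omega)
        (by simp) ?hcan]
      case hcan =>
        intro l hl1 hl2
        rw [if_neg (by omega : ¬ l = i-1), if_neg (by omega : ¬ l = i)]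
        exact hcan l hl1 (by omega)
      simp only [Option.some.injEq, Conf.mk.injEq, true_and, and_true]
      apply mapf_congr
      intro l _
      split_ifs <;> first | rfl | omega | simp_all

lemma runPushSlide (t j : ℕ) (f : ℕ → List ℕ) (inp' out : List ℕ) (x : ℕ) (hj : j < t)
    (hcan : ∀ l, j ≤ l → l < t → canPush x (f l) = true) :
    runLegal t ⟨x :: inp', mapf t f, out⟩ (t :: slideMoves j (t-1)) =
      some ⟨inp', mapf t (fun l => if l = j then x :: f j else f l), out⟩ := by
  have hleg : legal t ⟨x :: inp', mapf t f, out⟩ t = true := by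
    rw [legal_top_mapf t f _ out (by omega)]
    exact hcan (t-1) (by omega) (by omega)
  rw [runLegal_cons t _ t _ hleg, applyMove_push t f inp' out x (by omega)]
  by_cases hb : j = t - 1
  · subst hb
    rw [slideMoves_self]
    simp [runLegal]
  · rw [runSlide t j (t-1) _ inp' out x (f (t-1)) (by omega) (by omega) (by simp) ?hcan]
    case hcan =>
      intro l h1 h2
      rw [if_neg (by omega : ¬ l = t-1)]
      exact hcan l h1 (by omega)
    simp only [Option.some.injEq, Conf.mk.injEq, true_and, and_true]
    apply mapf_congr
    intro l _
    split_ifs <;> first | rfl | omega | simp_all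

lemma runPop (t : ℕ) (f : ℕ → List ℕ) (inp out : List ℕ) (x : ℕ) (r : List ℕ) (ms : List ℕ)
    (ht : 0 < t) (h0 : f 0 = x :: r) (hx : x = out.length + 1) :
    runLegal t ⟨inp, mapf t f, out⟩ (0 :: ms) =
      runLegal t ⟨inp, mapf t (fun l => if l = 0 then r else f l), out ++ [x]⟩ ms := by
  have hleg : legal t ⟨inp, mapf t f, out⟩ 0 = true := by
    rw [legal_zero_mapf t f inp out ht, h0]
    simp [hx]
  rw [runLegal_cons t _ 0 _ hleg, applyMove_pop t f inp out x r ht h0]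

end Stmt15Aux
namespace Stmt15Aux

/-- the permutation -/
def PP (t : ℕ) : List ℕ := [2, 5, 4, 1] ++ List.range' 6 (t - 1) ++ [3]

/-- middle-phase configs for the sorting witness: `6..5+m` stored at stacks `1..m` -/
def Hf (m : ℕ) : ℕ → List ℕ := fun l => if l = 0 then [4,5] else if l ≤ m then [5+l] else []
def Hc (t m : ℕ) : Conf := ⟨List.range' (6+m) (t-1-m) ++ [3], mapf t (Hf m), [1,2]⟩

lemma canPush_nil (x : ℕ) : canPush x [] = true := rfl

lemma conf_eq {i1 i2 o1 o2 : List ℕ} {s1 s2 : List (List ℕ)}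
    (h1 : i1 = i2) (h2 : s1 = s2) (h3 : o1 = o2) :
    (⟨i1, s1, o1⟩ : Conf) = ⟨i2, s2, o2⟩ := by subst h1 h2 h3; rfl

lemma H_step (t m : ℕ) (ht : 2 < t) (hm : m < t - 1) :
    ∃ ms, runLegal t (Hc t m) ms = some (Hc t (m+1)) := by
  have h1 : t - 1 - m = (t-2-m) + 1 := by omega
  have h2 : 6 + m + 1 = 7 + m := by omega
  have hin : Hc t m = ⟨(6+m) :: (List.range' (7+m) (t-2-m) ++ [3]), mapf t (Hf m), [1,2]⟩ := by
    rw [Hc, h1, List.range'_succ, h2]; rfl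
  refine ⟨t :: slideMoves (1+m) (t-1), ?_⟩
  rw [hin, runPushSlide t (1+m) (Hf m) _ _ (6+m) (by omega) ?can]
  case can =>
    intro l hl1 hl2
    have : Hf m l = [] := by unfold Hf; rw [if_neg (by omega), if_neg (by omega)]
    rw [this]; rfl
  unfold Hc
  refine congrArg some (conf_eq ?_ ?_ rfl)
  · rw [show t-1-(m+1) = t-2-m by omega, show 6+(m+1) = 7+m by omega]
  apply mapf_congr
  intro l _
  unfold Hf
  split_ifs <;> first | rfl | omega | simp_all <;> omega

lemma H_all (t : ℕ) (ht : 2 < t) : ∀ m, m ≤ t - 1 →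
    ∃ ms, runLegal t (Hc t 0) ms = some (Hc t m) := by
  intro m
  induction m with
  | zero => exact fun _ => ⟨[], rfl⟩
  | succ n ih =>
    intro h
    exact run_trans (ih (by omega)) (H_step t n ht (by omega))

/-- final-phase configs: elements `5+v .. t+4` at stacks `v..t-1`, output `1..4+v` -/
def Kf (v : ℕ) : ℕ → List ℕ := fun l => if l < v then [] else [5+l]
def Kc (t v : ℕ) : Conf := ⟨[], mapf t (Kf v), List.range' 1 (4+v)⟩

lemma K_step (t v : ℕ) (hv1 : 1 ≤ v) (hv2 : v ≤ t-1) :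
    ∃ ms, runLegal t (Kc t v) ms = some (Kc t (v+1)) := by
  refine ⟨slideMoves 0 v ++ [0], ?_⟩
  rw [Kc, runLegal_append t _ [0] _ _ (runSlide t 0 v (Kf v) [] _ (5+v) [] (by omega)
    (by omega) (by unfold Kf; rw [if_neg (by omega)]) ?can)]
  case can =>
    intro l hl1 hl2
    have : Kf v l = [] := by unfold Kf; rw [if_pos (by omega)]
    rw [this]; rfl
  rw [runPop t _ [] _ (5+v) [] []
    (by omega)
    (by rw [if_neg (by omega : ¬ (0:ℕ) = v), if_pos rfl,
          show Kf v 0 = [] by unfold Kf; rw [if_pos (by omega)]])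
    (by simp; omega)]
  show some _ = _
  unfold Kc
  refine congrArg some (conf_eq rfl ?_ ?_)
  · apply mapf_congr
    intro l _
    unfold Kf
    split_ifs <;> first | rfl | omega | simp_all <;> omega
  · rw [show 4+(v+1) = (4+v)+1 by omega, List.range'_concat]
    simp only [one_mul]
    rw [show 1+(4+v) = 5+v by omega]

lemma K_all (t : ℕ) (ht : 2 < t) : ∀ v, 1 ≤ v → v ≤ t →
    ∃ ms, runLegal t (Kc t 1) ms = some (Kc t v) := by
  intro v
  induction v with
  | zero => omega
  | succ n ih =>
    intro h1 h2
    rcases Nat.eq_or_lt_of_le h1 with h | h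
    · exact ⟨[], by rw [← h]; rfl⟩
    · exact run_trans (ih (by omega) (by omega)) (K_step t n (by omega) (by omega))

lemma sortable_main (t : ℕ) (ht : 2 < t) :
    ∃ ms, runLegal t (initConf t (PP t)) ms = some (finalConf t (t+4)) := by
  have hinit : initConf t (PP t) =
      ⟨2 :: ([5,4,1] ++ List.range' 6 (t-1) ++ [3]), mapf t (fun _ => []), []⟩ := by
    rw [initConf, mapf_nil]; rfl
  -- step 1 : push 2, slide to stack 0
  have s1 : ∃ ms, runLegal t (initConf t (PP t)) ms =
      some ⟨[5,4,1] ++ List.range' 6 (t-1) ++ [3],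
        mapf t (fun l => if l = 0 then [2] else []), []⟩ := by
    refine ⟨t :: slideMoves 0 (t-1), ?_⟩
    rw [hinit, runPushSlide t 0 (fun _ => []) _ _ 2 (by omega) (fun l _ _ => rfl)]
  -- step 2 : push 5, slide to stack 1
  have s2 : ∃ ms, runLegal t (initConf t (PP t)) ms =
      some ⟨[4,1] ++ List.range' 6 (t-1) ++ [3],
        mapf t (fun l => if l = 0 then [2] else if l = 1 then [5] else []), []⟩ := by
    refine run_trans s1 ⟨t :: slideMoves 1 (t-1), ?_⟩
    rw [show ([5,4,1] ++ List.range' 6 (t-1) ++ [3] : List ℕ) =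
      5 :: ([4,1] ++ List.range' 6 (t-1) ++ [3]) from rfl]
    rw [runPushSlide t 1 _ _ _ 5 (by omega) ?can]
    case can => intro l h1 h2; rw [if_neg (by omega)]; rfl
    refine congrArg some (conf_eq rfl ?_ rfl)
    apply mapf_congr
    intro l _
    split_ifs <;> first | rfl | omega | simp_all
  -- step 3 : push 4, slide to stack 2
  have s3 : ∃ ms, runLegal t (initConf t (PP t)) ms =
      some ⟨[1] ++ List.range' 6 (t-1) ++ [3],
        mapf t (fun l => if l = 0 then [2] else if l = 1 then [5] else
          if l = 2 then [4] else []), []⟩ := by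
    refine run_trans s2 ⟨t :: slideMoves 2 (t-1), ?_⟩
    rw [show ([4,1] ++ List.range' 6 (t-1) ++ [3] : List ℕ) =
      4 :: ([1] ++ List.range' 6 (t-1) ++ [3]) from rfl]
    rw [runPushSlide t 2 _ _ _ 4 (by omega) ?can]
    case can => intro l h1 h2; rw [if_neg (by omega), if_neg (by omega)]; rfl
    refine congrArg some (conf_eq rfl ?_ rfl)
    apply mapf_congr
    intro l _
    split_ifs <;> first | rfl | omega | simp_all
  -- step 4 : push 1, slide to stack 0; then pop 1, pop 2
  have s4 : ∃ ms, runLegal t (initConf t (PP t)) ms =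
      some ⟨List.range' 6 (t-1) ++ [3],
        mapf t (fun l => if l = 0 then [] else if l = 1 then [5] else
          if l = 2 then [4] else []), [1,2]⟩ := by
    refine run_trans s3 ⟨t :: slideMoves 0 (t-1) ++ [0,0], ?_⟩
    rw [show ([1] ++ List.range' 6 (t-1) ++ [3] : List ℕ) =
      1 :: (List.range' 6 (t-1) ++ [3]) from rfl]
    rw [show (t :: slideMoves 0 (t-1) ++ [0,0] : List ℕ) =
      (t :: slideMoves 0 (t-1)) ++ [0,0] from rfl]
    rw [runLegal_append t _ [0,0] _ _ (runPushSlide t 0 _ _ _ 1 (by omega) ?can)]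
    case can =>
      intro l h1 h2
      split_ifs <;> simp [canPush]
    rw [runPop t _ _ _ 1 [2] [0] (by omega) (by simp) (by simp)]
    rw [runPop t _ _ _ 2 [] [] (by omega) (by simp) (by simp)]
    show some _ = _
    refine congrArg some (conf_eq rfl ?_ rfl)
    apply mapf_congr
    intro l _
    split_ifs <;> first | rfl | omega | simp_all
  -- step 5 : slide 5 from stack 1 to stack 0, slide 4 from stack 2 to stack 0
  have s5 : ∃ ms, runLegal t (initConf t (PP t)) ms = some (Hc t 0) := by
    refine run_trans s4 ⟨slideMoves 0 1 ++ slideMoves 0 2, ?_⟩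
    rw [runLegal_append t _ _ _ _ (runSlide t 0 1 _ _ _ 5 [] (by omega) (by omega)
      (by simp) ?can1)]
    case can1 => intro l h1 h2; interval_cases l; rfl
    rw [runSlide t 0 2 _ _ _ 4 [] (by omega) (by omega) (by simp) ?can2]
    case can2 =>
      intro l h1 h2
      interval_cases l <;> simp [canPush]
    rw [Hc]
    refine congrArg some (conf_eq (by norm_num) ?_ rfl)
    apply mapf_congr
    intro l _
    unfold Hf
    split_ifs <;> first | rfl | omega | simp_all
  -- middle phase, then push 3 and slide to stack 0, pop 3,4,5
  have s6 : ∃ ms, runLegal t (initConf t (PP t)) ms = some (Kc t 1) := by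
    refine run_trans (run_trans s5 (H_all t ht (t-1) le_rfl)) ⟨(t :: slideMoves 0 (t-1)) ++ [0,0,0], ?_⟩
    have hc : Hc t (t-1) = ⟨3 :: [], mapf t (Hf (t-1)), [1,2]⟩ := by
      rw [Hc, show t-1-(t-1) = 0 by omega]; rfl
    rw [hc, runLegal_append t _ [0,0,0] _ _ (runPushSlide t 0 _ _ _ 3 (by omega) ?can)]
    case can =>
      intro l h1 h2
      unfold Hf
      split_ifs <;> simp [canPush] <;> omega
    rw [runPop t _ _ _ 3 [4,5] [0,0] (by omega) (by simp [Hf]) (by simp)]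
    rw [runPop t _ _ _ 4 [5] [0] (by omega) (by simp) (by simp)]
    rw [runPop t _ _ _ 5 [] [] (by omega) (by simp) (by simp)]
    show some _ = _
    rw [Kc]
    refine congrArg some (conf_eq rfl ?_ ?_)
    · apply mapf_congr
      intro l _
      unfold Hf Kf
      split_ifs <;> first | rfl | omega | simp_all <;> omega
    · norm_num [List.range']
  -- final phase
  have s7 : ∃ ms, runLegal t (initConf t (PP t)) ms = some (Kc t t) :=
    run_trans s6 (K_all t ht t (by omega) le_rfl)
  have hfin : Kc t t = finalConf t (t+4) := by
    rw [Kc, finalConf, show 4+t = t+4 by omega]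
    congr 1
    rw [← mapf_nil]
    apply mapf_congr
    intro l hl
    unfold Kf
    rw [if_pos hl]
  rw [← hfin]
  exact s7

end Stmt15Aux
namespace Stmt15Aux

lemma cp_false {x y : ℕ} (h : y ≤ x) (r : List ℕ) : canPush x (y :: r) = false := by
  simp [canPush]; omega

lemma cp_true {x y : ℕ} (h : x < y) (r : List ℕ) : canPush x (y :: r) = true := by
  simp [canPush]; omega

def gIn (t : ℕ) : List ℕ := List.range' 6 (t-1) ++ [3]

def gA (t i : ℕ) : Conf :=
  ⟨[5,4,1] ++ gIn t, mapf t (fun l => if l = i then [2] else []), []⟩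
def gB (t i : ℕ) : Conf :=
  ⟨[4,1] ++ gIn t, mapf t (fun l => if l = 0 then [2] else if l = i then [5] else []), []⟩
def gC (t i : ℕ) : Conf :=
  ⟨[1] ++ gIn t, mapf t (fun l => if l = 0 then [2] else if l = 1 then [5] else
    if l = i then [4] else []), []⟩
def gC' (t : ℕ) : Conf :=
  ⟨[1] ++ gIn t, mapf t (fun l => if l = 0 then [2] else if l = 1 then [4,5] else []), []⟩
def gF (t i : ℕ) : Conf :=
  ⟨gIn t, mapf t (fun l => if l = 0 then [2] else if l = 1 then [4,5] else
    if l = i then [1] else []), []⟩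
def gF1 (t : ℕ) : Conf :=
  ⟨gIn t, mapf t (fun l => if l = 0 then [2] else if l = 1 then [1,4,5] else []), []⟩
def gG0 (t : ℕ) : Conf :=
  ⟨gIn t, mapf t (fun l => if l = 0 then [1,2] else if l = 1 then [4,5] else []), []⟩
def gG1 (t : ℕ) : Conf :=
  ⟨gIn t, mapf t (fun l => if l = 0 then [2] else if l = 1 then [4,5] else []), [1]⟩
def gG2 (t : ℕ) : Conf :=
  ⟨gIn t, mapf t (fun l => if l = 1 then [4,5] else []), [1,2]⟩
def gD (t j : ℕ) : Conf :=
  ⟨List.range' (4+j) (t+1-j) ++ [3], mapf t (fun l => if l < j then [4+l] else []), [1,2]⟩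
def gE (t j i : ℕ) : Conf :=
  ⟨List.range' (5+j) (t-j) ++ [3],
    mapf t (fun l => if l < j then [4+l] else if l = i then [4+j] else []), [1,2]⟩

/-- step 0 : from the initial configuration, push 2 -/
lemma st0 (t : ℕ) (ht : 2 < t) :
    greedyStep leftMove t ⟨2 :: ([5,4,1] ++ gIn t), mapf t (fun _ => []), []⟩
      = gA t (t-1) := by
  rw [greedy_eq t t _ (leftMove_eq_some t t _ le_rfl ?low ?leg)]
  case low =>
    intro m hm
    rcases Nat.eq_zero_or_pos m with rfl | hp
    · rw [legal_zero_mapf t _ _ _ (by omega)]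
    · rw [legal_mid_mapf t m _ _ _ (by omega) (by omega)]
  case leg =>
    rw [legal_top_mapf t _ _ _ (by omega)]
    rfl
  rw [applyMove_push t _ _ _ 2 (by omega)]
  refine conf_eq rfl (mapf_congr ?_) rfl
  intro l _
  split_ifs <;> rfl

/-- slide 2 leftwards -/
lemma stA (t i : ℕ) (ht : 2 < t) (h1 : 1 ≤ i) (h2 : i < t) :
    greedyStep leftMove t (gA t i) = gA t (i-1) := by
  unfold gA
  rw [greedy_eq t i _ (leftMove_eq_some t i _ (by omega) ?low ?leg)]
  case low =>
    intro m hm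
    rcases Nat.eq_zero_or_pos m with rfl | hp
    · rw [legal_zero_mapf t _ _ _ (by omega), if_neg (by omega)]
    · rw [legal_mid_mapf t m _ _ _ (by omega) (by omega), if_neg (by omega)]
  case leg =>
    rw [legal_mid_mapf t i _ _ _ (by omega) h2, if_pos rfl, if_neg (by omega)]
    rfl
  rw [applyMove_mid t i _ _ _ 2 [] (by omega) h2 (by rw [if_pos rfl])]
  refine conf_eq rfl (mapf_congr ?_) rfl
  intro l _
  split_ifs <;> first | rfl | omega | simp_all

/-- at `gA t 0`, push 5 -/
lemma stA0 (t : ℕ) (ht : 2 < t) : greedyStep leftMove t (gA t 0) = gB t (t-1) := by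
  unfold gA gB
  rw [greedy_eq t t _ (leftMove_eq_some t t _ le_rfl ?low ?leg)]
  case low =>
    intro m hm
    rcases Nat.eq_zero_or_pos m with rfl | hp
    · rw [legal_zero_mapf t _ _ _ (by omega), if_pos rfl]
      rfl
    · rw [legal_mid_mapf t m _ _ _ (by omega) (by omega), if_neg (by omega)]
  case leg =>
    rw [legal_top_mapf t _ _ _ (by omega), if_neg (by omega)]
    rfl
  rw [show ([5,4,1] ++ gIn t : List ℕ) = 5 :: ([4,1] ++ gIn t) from rfl,
    applyMove_push t _ _ _ 5 (by omega)]
  refine conf_eq rfl (mapf_congr ?_) rfl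
  intro l _
  split_ifs <;> first | rfl | omega | simp_all

/-- slide 5 leftwards down to stack 1 -/
lemma stB (t i : ℕ) (ht : 2 < t) (h1 : 2 ≤ i) (h2 : i < t) :
    greedyStep leftMove t (gB t i) = gB t (i-1) := by
  unfold gB
  rw [greedy_eq t i _ (leftMove_eq_some t i _ (by omega) ?low ?leg)]
  case low =>
    intro m hm
    rcases Nat.eq_zero_or_pos m with rfl | hp
    · rw [legal_zero_mapf t _ _ _ (by omega), if_pos rfl]
      rfl
    · rw [legal_mid_mapf t m _ _ _ (by omega) (by omega), if_neg (by omega),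
        if_neg (by omega)]
  case leg =>
    rw [legal_mid_mapf t i _ _ _ (by omega) h2, if_neg (by omega), if_pos rfl,
      if_neg (by omega), if_neg (by omega)]
    rfl
  rw [applyMove_mid t i _ _ _ 5 [] (by omega) h2
    (by rw [if_neg (by omega), if_pos rfl])]
  refine conf_eq rfl (mapf_congr ?_) rfl
  intro l _
  split_ifs <;> first | rfl | omega | simp_all

/-- at `gB t 1`, push 4 -/
lemma stB1 (t : ℕ) (ht : 2 < t) : greedyStep leftMove t (gB t 1) = gC t (t-1) := by
  unfold gB gC
  rw [greedy_eq t t _ (leftMove_eq_some t t _ le_rfl ?low ?leg)]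
  case low =>
    intro m hm
    rcases Nat.eq_zero_or_pos m with rfl | hp
    · rw [legal_zero_mapf t _ _ _ (by omega), if_pos rfl]
      rfl
    · rcases Nat.eq_or_lt_of_le hp with rfl | hp2
      · rw [legal_mid_mapf t 1 _ _ _ (by omega) (by omega), if_neg (by omega), if_pos rfl]
        show canPush 5 (if (0:ℕ) = 0 then [2] else _) = false
        rw [if_pos rfl]
        exact cp_false (by omega) _
      · rw [legal_mid_mapf t m _ _ _ (by omega) (by omega), if_neg (by omega),
          if_neg (by omega)]
  case leg =>
    rw [legal_top_mapf t _ _ _ (by omega), if_neg (by omega), if_neg (by omega)]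
    rfl
  rw [show ([4,1] ++ gIn t : List ℕ) = 4 :: ([1] ++ gIn t) from rfl,
    applyMove_push t _ _ _ 4 (by omega)]
  refine conf_eq rfl (mapf_congr ?_) rfl
  intro l _
  split_ifs <;> first | rfl | omega | simp_all

/-- slide 4 leftwards down to stack 2 -/
lemma stC (t i : ℕ) (ht : 2 < t) (h1 : 3 ≤ i) (h2 : i < t) :
    greedyStep leftMove t (gC t i) = gC t (i-1) := by
  unfold gC
  rw [greedy_eq t i _ (leftMove_eq_some t i _ (by omega) ?low ?leg)]
  case low =>
    intro m hm
    rcases Nat.eq_zero_or_pos m with rfl | hp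
    · rw [legal_zero_mapf t _ _ _ (by omega), if_pos rfl]
      rfl
    · rcases Nat.eq_or_lt_of_le hp with rfl | hp2
      · rw [legal_mid_mapf t 1 _ _ _ (by omega) (by omega), if_neg (by omega), if_pos rfl]
        show canPush 5 (if (0:ℕ) = 0 then [2] else _) = false
        rw [if_pos rfl]
        exact cp_false (by omega) _
      · rw [legal_mid_mapf t m _ _ _ (by omega) (by omega), if_neg (by omega),
          if_neg (by omega), if_neg (by omega)]
  case leg =>
    rw [legal_mid_mapf t i _ _ _ (by omega) h2, if_neg (by omega), if_neg (by omega),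
      if_pos rfl, if_neg (by omega), if_neg (by omega), if_neg (by omega)]
    rfl
  rw [applyMove_mid t i _ _ _ 4 [] (by omega) h2
    (by rw [if_neg (by omega), if_neg (by omega), if_pos rfl])]
  refine conf_eq rfl (mapf_congr ?_) rfl
  intro l _
  split_ifs <;> first | rfl | omega | simp_all

/-- at `gC t 2`, move 4 onto 5 -/
lemma stC2 (t : ℕ) (ht : 2 < t) : greedyStep leftMove t (gC t 2) = gC' t := by
  unfold gC gC'
  rw [greedy_eq t 2 _ (leftMove_eq_some t 2 _ (by omega) ?low ?leg)]
  case low =>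
    intro m hm
    rcases Nat.eq_zero_or_pos m with rfl | hp
    · rw [legal_zero_mapf t _ _ _ (by omega), if_pos rfl]
      rfl
    · have : m = 1 := by omega
      subst this
      rw [legal_mid_mapf t 1 _ _ _ (by omega) (by omega), if_neg (by omega), if_pos rfl]
      show canPush 5 (if (0:ℕ) = 0 then [2] else _) = false
      rw [if_pos rfl]
      exact cp_false (by omega) _
  case leg =>
    rw [legal_mid_mapf t 2 _ _ _ (by omega) (by omega), if_neg (by omega),
      if_neg (by omega), if_pos rfl]
    show canPush 4 (if (1:ℕ) = 0 then [2] else if (1:ℕ) = 1 then [5] else _) = true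
    rw [if_neg (by omega), if_pos rfl]
    exact cp_true (by omega) _
  rw [applyMove_mid t 2 _ _ _ 4 [] (by omega) (by omega)
    (by rw [if_neg (by omega), if_neg (by omega), if_pos rfl])]
  refine conf_eq rfl (mapf_congr ?_) rfl
  intro l _
  split_ifs <;> first | rfl | omega | simp_all

/-- at `gC' t`, push 1 -/
lemma stC' (t : ℕ) (ht : 2 < t) : greedyStep leftMove t (gC' t) = gF t (t-1) := by
  unfold gC' gF
  rw [greedy_eq t t _ (leftMove_eq_some t t _ le_rfl ?low ?leg)]
  case low =>
    intro m hm
    rcases Nat.eq_zero_or_pos m with rfl | hp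
    · rw [legal_zero_mapf t _ _ _ (by omega), if_pos rfl]
      rfl
    · rcases Nat.eq_or_lt_of_le hp with rfl | hp2
      · rw [legal_mid_mapf t 1 _ _ _ (by omega) (by omega), if_neg (by omega), if_pos rfl]
        show canPush 4 (if (0:ℕ) = 0 then [2] else _) = false
        rw [if_pos rfl]
        exact cp_false (by omega) _
      · rw [legal_mid_mapf t m _ _ _ (by omega) (by omega), if_neg (by omega),
          if_neg (by omega)]
  case leg =>
    rw [legal_top_mapf t _ _ _ (by omega), if_neg (by omega), if_neg (by omega)]
    rfl
  rw [show ([1] ++ gIn t : List ℕ) = 1 :: gIn t from rfl,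
    applyMove_push t _ _ _ 1 (by omega)]
  refine conf_eq rfl (mapf_congr ?_) rfl
  intro l _
  split_ifs <;> first | rfl | omega | simp_all

/-- slide 1 leftwards down to stack 2 -/
lemma stF (t i : ℕ) (ht : 2 < t) (h1 : 3 ≤ i) (h2 : i < t) :
    greedyStep leftMove t (gF t i) = gF t (i-1) := by
  unfold gF
  rw [greedy_eq t i _ (leftMove_eq_some t i _ (by omega) ?low ?leg)]
  case low =>
    intro m hm
    rcases Nat.eq_zero_or_pos m with rfl | hp
    · rw [legal_zero_mapf t _ _ _ (by omega), if_pos rfl]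
      rfl
    · rcases Nat.eq_or_lt_of_le hp with rfl | hp2
      · rw [legal_mid_mapf t 1 _ _ _ (by omega) (by omega), if_neg (by omega), if_pos rfl]
        show canPush 4 (if (0:ℕ) = 0 then [2] else _) = false
        rw [if_pos rfl]
        exact cp_false (by omega) _
      · rw [legal_mid_mapf t m _ _ _ (by omega) (by omega), if_neg (by omega),
          if_neg (by omega), if_neg (by omega)]
  case leg =>
    rw [legal_mid_mapf t i _ _ _ (by omega) h2, if_neg (by omega), if_neg (by omega),
      if_pos rfl, if_neg (by omega), if_neg (by omega), if_neg (by omega)]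
    rfl
  rw [applyMove_mid t i _ _ _ 1 [] (by omega) h2
    (by rw [if_neg (by omega), if_neg (by omega), if_pos rfl])]
  refine conf_eq rfl (mapf_congr ?_) rfl
  intro l _
  split_ifs <;> first | rfl | omega | simp_all

/-- at `gF t 2`, move 1 onto 4 -/
lemma stF2 (t : ℕ) (ht : 2 < t) : greedyStep leftMove t (gF t 2) = gF1 t := by
  unfold gF gF1
  rw [greedy_eq t 2 _ (leftMove_eq_some t 2 _ (by omega) ?low ?leg)]
  case low =>
    intro m hm
    rcases Nat.eq_zero_or_pos m with rfl | hp
    · rw [legal_zero_mapf t _ _ _ (by omega), if_pos rfl]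
      rfl
    · have : m = 1 := by omega
      subst this
      rw [legal_mid_mapf t 1 _ _ _ (by omega) (by omega), if_neg (by omega), if_pos rfl]
      show canPush 4 (if (0:ℕ) = 0 then [2] else _) = false
      rw [if_pos rfl]
      exact cp_false (by omega) _
  case leg =>
    rw [legal_mid_mapf t 2 _ _ _ (by omega) (by omega), if_neg (by omega),
      if_neg (by omega), if_pos rfl]
    show canPush 1 (if (1:ℕ) = 0 then [2] else if (1:ℕ) = 1 then [4,5] else _) = true
    rw [if_neg (by omega), if_pos rfl]
    exact cp_true (by omega) _
  rw [applyMove_mid t 2 _ _ _ 1 [] (by omega) (by omega)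
    (by rw [if_neg (by omega), if_neg (by omega), if_pos rfl])]
  refine conf_eq rfl (mapf_congr ?_) rfl
  intro l _
  split_ifs <;> first | rfl | omega | simp_all

/-- at `gF1 t`, move 1 onto 2 -/
lemma stF1 (t : ℕ) (ht : 2 < t) : greedyStep leftMove t (gF1 t) = gG0 t := by
  unfold gF1 gG0
  rw [greedy_eq t 1 _ (leftMove_eq_some t 1 _ (by omega) ?low ?leg)]
  case low =>
    intro m hm
    have : m = 0 := by omega
    subst this
    rw [legal_zero_mapf t _ _ _ (by omega), if_pos rfl]
    rfl
  case leg =>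
    rw [legal_mid_mapf t 1 _ _ _ (by omega) (by omega), if_neg (by omega), if_pos rfl]
    show canPush 1 (if (0:ℕ) = 0 then [2] else _) = true
    rw [if_pos rfl]
    exact cp_true (by omega) _
  rw [applyMove_mid t 1 _ _ _ 1 [4,5] (by omega) (by omega)
    (by rw [if_neg (by omega), if_pos rfl])]
  refine conf_eq rfl (mapf_congr ?_) rfl
  intro l _
  split_ifs <;> first | rfl | omega | simp_all

/-- pop 1 -/
lemma stG0 (t : ℕ) (ht : 2 < t) : greedyStep leftMove t (gG0 t) = gG1 t := by
  unfold gG0 gG1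
  rw [greedy_eq t 0 _ (leftMove_eq_some t 0 _ (by omega) (by omega) ?leg)]
  case leg =>
    rw [legal_zero_mapf t _ _ _ (by omega), if_pos rfl]
    rfl
  rw [applyMove_pop t _ _ _ 1 [2] (by omega) (by rw [if_pos rfl])]
  refine conf_eq rfl (mapf_congr ?_) rfl
  intro l _
  split_ifs <;> first | rfl | omega | simp_all

/-- pop 2 -/
lemma stG1 (t : ℕ) (ht : 2 < t) : greedyStep leftMove t (gG1 t) = gG2 t := by
  unfold gG1 gG2
  rw [greedy_eq t 0 _ (leftMove_eq_some t 0 _ (by omega) (by omega) ?leg)]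
  case leg =>
    rw [legal_zero_mapf t _ _ _ (by omega), if_pos rfl]
    rfl
  rw [applyMove_pop t _ _ _ 2 [] (by omega) (by rw [if_pos rfl])]
  refine conf_eq rfl (mapf_congr ?_) rfl
  intro l _
  split_ifs <;> first | rfl | omega | simp_all

/-- move 4 off 5 : reach the main phase -/
lemma stG2 (t : ℕ) (ht : 2 < t) : greedyStep leftMove t (gG2 t) = gD t 2 := by
  unfold gG2 gD
  rw [greedy_eq t 1 _ (leftMove_eq_some t 1 _ (by omega) ?low ?leg)]
  case low =>
    intro m hm
    have : m = 0 := by omega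
    subst this
    rw [legal_zero_mapf t _ _ _ (by omega), if_neg (by omega)]
  case leg =>
    rw [legal_mid_mapf t 1 _ _ _ (by omega) (by omega), if_pos rfl]
    show canPush 4 (if (0:ℕ) = 1 then [4,5] else []) = true
    rw [if_neg (by omega)]
    rfl
  rw [applyMove_mid t 1 _ _ _ 4 [5] (by omega) (by omega) (by rw [if_pos rfl])]
  refine conf_eq ?_ (mapf_congr ?_) rfl
  · show gIn t = _
    rw [gIn, show t+1-2 = t-1 by omega]
  · intro l _
    split_ifs <;> first | rfl | omega | simp_all

/-- main phase : at `gD t j` (`2 ≤ j < t`), push `4+j` -/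
lemma stD (t j : ℕ) (ht : 2 < t) (h1 : 2 ≤ j) (h2 : j < t) :
    greedyStep leftMove t (gD t j) = gE t j (t-1) := by
  have hin : gD t j = ⟨(4+j) :: (List.range' (5+j) (t-j) ++ [3]),
      mapf t (fun l => if l < j then [4+l] else []), [1,2]⟩ := by
    rw [gD, show t+1-j = (t-j)+1 by omega, List.range'_succ, show 4+j+1 = 5+j by omega]
    rfl
  unfold gE
  rw [hin, greedy_eq t t _ (leftMove_eq_some t t _ le_rfl ?low ?leg)]
  case low =>
    intro m hm
    rcases Nat.eq_zero_or_pos m with rfl | hp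
    · rw [legal_zero_mapf t _ _ _ (by omega), if_pos (by omega)]
      rfl
    · rw [legal_mid_mapf t m _ _ _ (by omega) (by omega)]
      by_cases hmj : m < j
      · rw [if_pos hmj]
        show canPush (4+m) (if m-1 < j then [4+(m-1)] else []) = false
        rw [if_pos (by omega)]
        exact cp_false (by omega) _
      · rw [if_neg hmj]
  case leg =>
    rw [legal_top_mapf t _ _ _ (by omega), if_neg (by omega)]
    rfl
  rw [applyMove_push t _ _ _ (4+j) (by omega)]
  refine conf_eq rfl (mapf_congr ?_) rfl
  intro l _
  split_ifs <;> first | rfl | omega | simp_all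

/-- main phase : slide `4+j` leftwards -/
lemma stE (t j i : ℕ) (ht : 2 < t) (h1 : 2 ≤ j) (h2 : j < i) (h3 : i < t) :
    greedyStep leftMove t (gE t j i) = gE t j (i-1) := by
  unfold gE
  rw [greedy_eq t i _ (leftMove_eq_some t i _ (by omega) ?low ?leg)]
  case low =>
    intro m hm
    rcases Nat.eq_zero_or_pos m with rfl | hp
    · rw [legal_zero_mapf t _ _ _ (by omega), if_pos (by omega)]
      rfl
    · rw [legal_mid_mapf t m _ _ _ (by omega) (by omega)]
      by_cases hmj : m < j
      · rw [if_pos hmj]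
        show canPush (4+m) (if m-1 < j then [4+(m-1)] else if m-1 = i then [4+j] else []) = false
        rw [if_pos (by omega)]
        exact cp_false (by omega) _
      · rw [if_neg hmj, if_neg (by omega)]
  case leg =>
    rw [legal_mid_mapf t i _ _ _ (by omega) h3, if_neg (by omega), if_pos rfl]
    show canPush (4+j) (if i-1 < j then [4+(i-1)] else if i-1 = i then [4+j] else []) = true
    rw [if_neg (by omega), if_neg (by omega)]
    rfl
  rw [applyMove_mid t i _ _ _ (4+j) [] (by omega) h3
    (by rw [if_neg (by omega), if_pos rfl])]
  refine conf_eq rfl (mapf_congr ?_) rfl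
  intro l _
  split_ifs <;> first | rfl | omega | simp_all

lemma gE_eq_gD (t j : ℕ) (h1 : 2 ≤ j) (h2 : j < t) : gE t j j = gD t (j+1) := by
  unfold gE gD
  refine conf_eq ?_ (mapf_congr ?_) rfl
  · rw [show (4:ℕ)+(j+1) = 5+j by omega, show t+1-(j+1) = t-j by omega]
  · intro l _
    split_ifs <;> first | rfl | omega | simp_all <;> omega

/-- the stuck configuration -/
lemma gD_input (t : ℕ) (ht : 2 < t) : (gD t t).input = [t+4, 3] := by
  show List.range' (4+t) (t+1-t) ++ [3] = _
  rw [show t+1-t = 1 by omega, show 4+t = t+4 by omega]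
  rfl

lemma stuck (t : ℕ) (ht : 2 < t) : leftMove t (gD t t) = none := by
  have hin : gD t t = ⟨(t+4) :: [3],
      mapf t (fun l => if l < t then [4+l] else []), [1,2]⟩ := by
    refine conf_eq ?_ rfl rfl
    rw [show t+1-t = 1 by omega, show 4+t = t+4 by omega]
    rfl
  rw [hin]
  apply leftMove_eq_none
  intro m hm
  rcases Nat.eq_zero_or_pos m with rfl | hp
  · rw [legal_zero_mapf t _ _ _ (by omega), if_pos (by omega)]
    rfl
  rcases Nat.eq_or_lt_of_le hm with heq | hmt
  · rw [heq, legal_top_mapf t _ _ _ (by omega), if_pos (by omega)]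
    exact cp_false (by omega) _
  · rw [legal_mid_mapf t m _ _ _ (by omega) (by omega), if_pos (by omega)]
    show canPush (4+m) (if m-1 < t then [4+(m-1)] else []) = false
    rw [if_pos (by omega)]
    exact cp_false (by omega) _

lemma final_none (t n : ℕ) (ht : 2 < t) : leftMove t (finalConf t n) = none := by
  have hin : finalConf t n = ⟨[], mapf t (fun _ => []), List.range' 1 n⟩ := by
    rw [finalConf, mapf_nil]
  rw [hin]
  apply leftMove_eq_none
  intro m hm
  rcases Nat.eq_zero_or_pos m with rfl | hp
  · rw [legal_zero_mapf t _ _ _ (by omega)]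
  rcases Nat.eq_or_lt_of_le hm with heq | hmt
  · rw [heq, legal_top_mapf t _ _ _ (by omega)]
  · rw [legal_mid_mapf t m _ _ _ (by omega) (by omega)]

end Stmt15Aux
namespace Stmt15Aux

lemma gA_down (t : ℕ) (ht : 2 < t) : ∀ i, i < t →
    ∃ k, (greedyStep leftMove t)^[k] (gA t i) = gA t 0 := by
  intro i
  induction i with
  | zero => exact fun _ => ⟨0, rfl⟩
  | succ n ih =>
    intro h
    refine iter_trans ⟨1, ?_⟩ (ih (by omega))
    simpa using stA t (n+1) ht (by omega) h

lemma gB_down (t : ℕ) (ht : 2 < t) : ∀ i, 1 ≤ i → i < t →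
    ∃ k, (greedyStep leftMove t)^[k] (gB t i) = gB t 1 := by
  intro i
  induction i with
  | zero => omega
  | succ n ih =>
    intro h1 h2
    rcases Nat.eq_or_lt_of_le h1 with heq | hlt
    · exact ⟨0, by simp [← heq]⟩
    · refine iter_trans ⟨1, ?_⟩ (ih (by omega) (by omega))
      simpa using stB t (n+1) ht (by omega) h2

lemma gC_down (t : ℕ) (ht : 2 < t) : ∀ i, 2 ≤ i → i < t →
    ∃ k, (greedyStep leftMove t)^[k] (gC t i) = gC t 2 := by
  intro i
  induction i with
  | zero => omega
  | succ n ih =>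
    intro h1 h2
    rcases Nat.eq_or_lt_of_le h1 with heq | hlt
    · exact ⟨0, by simp [← heq]⟩
    · refine iter_trans ⟨1, ?_⟩ (ih (by omega) (by omega))
      simpa using stC t (n+1) ht (by omega) h2

lemma gF_down (t : ℕ) (ht : 2 < t) : ∀ i, 2 ≤ i → i < t →
    ∃ k, (greedyStep leftMove t)^[k] (gF t i) = gF t 2 := by
  intro i
  induction i with
  | zero => omega
  | succ n ih =>
    intro h1 h2
    rcases Nat.eq_or_lt_of_le h1 with heq | hlt
    · exact ⟨0, by simp [← heq]⟩
    · refine iter_trans ⟨1, ?_⟩ (ih (by omega) (by omega))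
      simpa using stF t (n+1) ht (by omega) h2

lemma gE_down (t j : ℕ) (ht : 2 < t) (hj : 2 ≤ j) : ∀ i, j ≤ i → i < t →
    ∃ k, (greedyStep leftMove t)^[k] (gE t j i) = gE t j j := by
  intro i
  induction i with
  | zero => omega
  | succ n ih =>
    intro h1 h2
    rcases Nat.eq_or_lt_of_le h1 with heq | hlt
    · exact ⟨0, by simp [heq]⟩
    · refine iter_trans ⟨1, ?_⟩ (ih (by omega) (by omega))
      simpa using stE t j (n+1) ht hj (by omega) h2

lemma gD_up (t : ℕ) (ht : 2 < t) : ∀ j, 2 ≤ j → j ≤ t →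
    ∃ k, (greedyStep leftMove t)^[k] (gD t 2) = gD t j := by
  intro j
  induction j with
  | zero => omega
  | succ n ih =>
    intro h1 h2
    rcases Nat.eq_or_lt_of_le h1 with heq | hlt
    · exact ⟨0, by simp [← heq]⟩
    · have h3 : 2 ≤ n := by omega
      refine iter_trans (ih h3 (by omega)) ?_
      refine iter_trans ⟨1, by simpa using stD t n ht h3 (by omega)⟩ ?_
      refine iter_trans (gE_down t n ht h3 (t-1) (by omega) (by omega)) ?_
      exact ⟨0, by simp [gE_eq_gD t n h3 (by omega)]⟩

lemma reach_stuck (t : ℕ) (ht : 2 < t) :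
    ∃ k, (greedyStep leftMove t)^[k] (initConf t (PP t)) = gD t t := by
  have h0 : initConf t (PP t) = ⟨2 :: ([5,4,1] ++ gIn t), mapf t (fun _ => []), []⟩ := by
    rw [initConf, mapf_nil]
    refine conf_eq ?_ rfl rfl
    simp [PP, gIn]
  refine iter_trans ⟨1, by rw [Function.iterate_one, h0, st0 t ht]⟩ ?_
  refine iter_trans (gA_down t ht (t-1) (by omega)) ?_
  refine iter_trans ⟨1, by simpa using stA0 t ht⟩ ?_
  refine iter_trans (gB_down t ht (t-1) (by omega) (by omega)) ?_
  refine iter_trans ⟨1, by simpa using stB1 t ht⟩ ?_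
  refine iter_trans (gC_down t ht (t-1) (by omega) (by omega)) ?_
  refine iter_trans ⟨1, by simpa using stC2 t ht⟩ ?_
  refine iter_trans ⟨1, by simpa using stC' t ht⟩ ?_
  refine iter_trans (gF_down t ht (t-1) (by omega) (by omega)) ?_
  refine iter_trans ⟨1, by simpa using stF2 t ht⟩ ?_
  refine iter_trans ⟨1, by simpa using stF1 t ht⟩ ?_
  refine iter_trans ⟨1, by simpa using stG0 t ht⟩ ?_
  refine iter_trans ⟨1, by simpa using stG1 t ht⟩ ?_
  refine iter_trans ⟨1, by simpa using stG2 t ht⟩ ?_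
  exact gD_up t ht t (by omega) le_rfl

lemma PP_length (t : ℕ) (ht : 2 < t) : (PP t).length = t + 4 := by
  simp [PP]
  omega

end Stmt15Aux


/-- For `t > 2`, the permutation `2 5 4 1 6 7 ... (t+4) 3` is sortable by `t` stacks in
series, but the left-greedy algorithm on `t` stacks fails on it, at the moment `t+4`
would need to enter the stacks. -/
theorem stmt15 (t : ℕ) (ht : 2 < t) :
    Sortable t ([2, 5, 4, 1] ++ List.range' 6 (t - 1) ++ [3]) ∧
    ¬ LeftGreedySorts t ([2, 5, 4, 1] ++ List.range' 6 (t - 1) ++ [3]) ∧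
    ∃ k : ℕ,
      leftMove t ((greedyStep leftMove t)^[k]
        (initConf t ([2, 5, 4, 1] ++ List.range' 6 (t - 1) ++ [3]))) = none ∧
      ((greedyStep leftMove t)^[k]
        (initConf t ([2, 5, 4, 1] ++ List.range' 6 (t - 1) ++ [3]))).input = [t + 4, 3] := by
  rw [show ([2, 5, 4, 1] ++ List.range' 6 (t - 1) ++ [3] : List ℕ) = Stmt15Aux.PP t from rfl]
  obtain ⟨k0, hk0⟩ := Stmt15Aux.reach_stuck t ht
  refine ⟨?_, ?_, ?_⟩
  · show ∃ ms, runLegal t (initConf t (Stmt15Aux.PP t)) ms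
      = some (finalConf t (Stmt15Aux.PP t).length)
    rw [Stmt15Aux.PP_length t ht]
    exact Stmt15Aux.sortable_main t ht
  · show ¬ ∃ k, (greedyStep leftMove t)^[k] (initConf t (Stmt15Aux.PP t))
      = finalConf t (Stmt15Aux.PP t).length
    rw [Stmt15Aux.PP_length t ht]
    rintro ⟨k, hk⟩
    have hfix1 : greedyStep leftMove t (Stmt15Aux.gD t t) = Stmt15Aux.gD t t :=
      Stmt15Aux.greedy_none t _ (Stmt15Aux.stuck t ht)
    have hfix2 : greedyStep leftMove t (finalConf t (t+4)) = finalConf t (t+4) :=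
      Stmt15Aux.greedy_none t _ (Stmt15Aux.final_none t _ ht)
    have hne : Stmt15Aux.gD t t ≠ finalConf t (t+4) := by
      intro h
      have h2 := congrArg Conf.input h
      rw [Stmt15Aux.gD_input t ht] at h2
      simp [finalConf] at h2
    rcases le_total k k0 with h | h
    · apply hne
      rw [← hk0, show k0 = (k0 - k) + k by omega, Function.iterate_add_apply, hk,
        Function.iterate_fixed hfix2 (k0 - k)]
    · apply hne
      rw [← hk, show k = (k - k0) + k0 by omega, Function.iterate_add_apply, hk0,
        Function.iterate_fixed hfix1 (k - k0)]
  · exact ⟨k0, by rw [hk0]; exact ⟨Stmt15Aux.stuck t ht, Stmt15Aux.gD_input t ht⟩⟩
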